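/- Let k ≥ 2 be an integer, A a k-mixing F-algebra, and S a generating set of A. If w is an irreducible word in S with l(w) ≥ature 2, then there exist irreducible k-bounded words w_1, …, w_n in S with l(w_i) ≤ l(w) for all i such that w lies in the F-linear span of w_1, …, w_n. -/

import Mathlib

namespace P

/-- The list of leaves (letters) of a nonassociative word, in order. -/
def leafList {α : Type*} : FreeMagma α → List α
  | .of a => [a]
  | .mul x y => leafList x ++ leafList y

/-- The length of a nonassociative word: the number of factors. -/
def wlen {α : Type*} (w : FreeMagma α) : ℕ := (leafList w).length

/-- Evaluation of a formal word with letters in a magma `A`. -/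
def evalA {A : Type*} [Mul A] (w : FreeMagma A) : A :=
  FreeMagma.lift (id : A → A) w

/-- Evaluation of a formal word in variables `Fin n` under an assignment `v`. -/
def evalVar {A : Type*} [Mul A] {n : ℕ} (v : Fin n → A) (w : FreeMagma (Fin n)) : A :=
  FreeMagma.lift v w

/-- `w` is a word in the set `S`: all its letters belong to `S`. -/
def HasLeavesIn {A : Type*} (S : Set A) (w : FreeMagma A) : Prop :=
  ∀ a ∈ leafList w, a ∈ S

/-- `L_i(S)`: the span of all values of words in `S` of length at most `i`.
For `i = 0` this is `0`, since every word has length at least 1. -/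
def Lspan (F : Type*) {A : Type*} [Field F] [NonUnitalNonAssocRing A] [Module F A]
    (S : Set A) (i : ℕ) : Submodule F A :=
  Submodule.span F { a | ∃ w : FreeMagma A, HasLeavesIn S w ∧ wlen w ≤ i ∧ evalA w = a }

/-- `S` is a generating set of the algebra `A`. -/
def Generates (F : Type*) {A : Type*} [Field F] [NonUnitalNonAssocRing A] [Module F A]
    (S : Set A) : Prop :=
  Submodule.span F { a | ∃ w : FreeMagma A, HasLeavesIn S w ∧ evalA w = a } = ⊤

/-- The length `l(S)` of a generating set: the least `k` with `L_k(S) = A`. -/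
noncomputable def lenS (F : Type*) {A : Type*} [Field F] [NonUnitalNonAssocRing A] [Module F A]
    (S : Set A) : ℕ :=
  sInf { k | Lspan F S k = ⊤ }

/-- The characteristic sequence of a generating set `S`, as a predicate on a
nondecreasing sequence `m : Fin d → ℕ`. -/
def IsCharSeq (F : Type*) {A : Type*} [Field F] [NonUnitalNonAssocRing A] [Module F A]
    (S : Set A) {d : ℕ} (m : Fin d → ℕ) : Prop :=
  Monotone m ∧ (∀ j, 1 ≤ m j) ∧
    ∀ t : ℕ, 1 ≤ t →
      (Finset.univ.filter fun j => m j = t).card =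
        Module.finrank F (Lspan F S t) - Module.finrank F (Lspan F S (t - 1))

/-- `w` is a multilinear word using each variable of `T` exactly once. -/
def IsMultilinearOn {n : ℕ} (T : Finset (Fin n)) (w : FreeMagma (Fin n)) : Prop :=
  (leafList w : Multiset (Fin n)) = T.val

/-- Membership in `D_0(z_0,…,z_k)`: multilinear words in `z_0,…,z_k` except those of
length `k+1` in which `z_0` is a factor of the last multiplication. -/
def InD0 {k : ℕ} (w : FreeMagma (Fin (k + 1))) : Prop :=
  (leafList w : Multiset (Fin (k + 1))).Nodup ∧
    ¬∃ u : FreeMagma (Fin (k + 1)),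
        IsMultilinearOn (Finset.univ.erase 0) u ∧
          (w = FreeMagma.of 0 * u ∨ w = u * FreeMagma.of 0)

/-- Membership in `D_l(z_0,…,z_k)`: multilinear words in `z_0,…,z_k` except those of
length `k+1` in which `z_0` occurs in the first factor of the last multiplication. -/
def InDl {k : ℕ} (w : FreeMagma (Fin (k + 1))) : Prop :=
  (leafList w : Multiset (Fin (k + 1))).Nodup ∧
    ¬((leafList w : Multiset (Fin (k + 1))) = (Finset.univ : Finset (Fin (k + 1))).val ∧
      ∃ w1 w2 : FreeMagma (Fin (k + 1)), w = w1 * w2 ∧ (0 : Fin (k + 1)) ∈ leafList w1)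

/-- Membership in `D_r(z_0,…,z_k)`: multilinear words in `z_0,…,z_k` except those of
length `k+1` in which `z_0` occurs in the second factor of the last multiplication. -/
def InDr {k : ℕ} (w : FreeMagma (Fin (k + 1))) : Prop :=
  (leafList w : Multiset (Fin (k + 1))).Nodup ∧
    ¬((leafList w : Multiset (Fin (k + 1))) = (Finset.univ : Finset (Fin (k + 1))).val ∧
      ∃ w1 w2 : FreeMagma (Fin (k + 1)), w = w1 * w2 ∧ (0 : Fin (k + 1)) ∈ leafList w2)

/-- The algebra `A` is `k`-mixing. -/
def IsKMixing (F A : Type*) [Field F] [NonUnitalNonAssocRing A] [Module F A] (k : ℕ) : Prop :=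
  ∀ (x : A) (y : Fin k → A) (w : FreeMagma (Fin (k + 1))),
    (∃ u, IsMultilinearOn (Finset.univ.erase 0) u ∧
        (w = FreeMagma.of 0 * u ∨ w = u * FreeMagma.of 0)) →
      evalVar (Fin.cons x y) w ∈
        Submodule.span F
          { a | ∃ z : FreeMagma (Fin (k + 1)), InD0 z ∧ evalVar (Fin.cons x y) z = a }

/-- The algebra `A` is `k`-sliding. -/
def IsKSliding (F A : Type*) [Field F] [NonUnitalNonAssocRing A] [Module F A] (k : ℕ) : Prop :=
  (∀ (x : A) (y : Fin k → A) (u : FreeMagma (Fin (k + 1))),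
      IsMultilinearOn (Finset.univ.erase 0) u →
        evalVar (Fin.cons x y) (u * FreeMagma.of 0) ∈
          Submodule.span F
            { a | ∃ z : FreeMagma (Fin (k + 1)), InDl z ∧ evalVar (Fin.cons x y) z = a }) ∨
  (∀ (x : A) (y : Fin k → A) (u : FreeMagma (Fin (k + 1))),
      IsMultilinearOn (Finset.univ.erase 0) u →
        evalVar (Fin.cons x y) (FreeMagma.of 0 * u) ∈
          Submodule.span F
            { a | ∃ z : FreeMagma (Fin (k + 1)), InDr z ∧ evalVar (Fin.cons x y) z = a })

/-- `u` is a subword of `w`. -/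
inductive IsSubword {A : Type*} : FreeMagma A → FreeMagma A → Prop
  | refl (w : FreeMagma A) : IsSubword w w
  | left {s u : FreeMagma A} (v : FreeMagma A) : IsSubword s u → IsSubword s (u * v)
  | right (u : FreeMagma A) {s v : FreeMagma A} : IsSubword s v → IsSubword s (u * v)

/-- `IsSprout w L`: `L` is a sprout sequence of the word `w` (with the convention that
words of length 1 have the empty sprout sequence). -/
inductive IsSprout {A : Type*} : FreeMagma A → List (FreeMagma A) → Prop
  | single (a : A) : IsSprout (FreeMagma.of a) []
  | cons_l {u v : FreeMagma A} {L : List (FreeMagma A)} :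
      wlen u ≤ wlen v → IsSprout v L → IsSprout (u * v) (u :: L)
  | cons_r {u v : FreeMagma A} {L : List (FreeMagma A)} :
      wlen v ≤ wlen u → IsSprout u L → IsSprout (u * v) (v :: L)

/-- A word is `k`-bounded if it has length 1 or admits an `l`-sprout sequence all of whose
terms are strictly less than `k`. -/
def KBounded {A : Type*} (k : ℕ) (w : FreeMagma A) : Prop :=
  ∃ L : List (FreeMagma A), IsSprout w L ∧ ∀ u ∈ L, wlen u < k

/-- A word `w` in `S` is irreducible if it does not lie in `L_m(S)` for any `m < l(w)`. -/
def Irred (F : Type*) {A : Type*} [Field F] [NonUnitalNonAssocRing A] [Module F A]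
    (S : Set A) (w : FreeMagma A) : Prop :=
  ∀ m : ℕ, m < wlen w → evalA w ∉ Lspan F S m

/-- The step function of a word: the least `t` such that `w` has a subword of
length `l(w) - 2t - 1`. -/
noncomputable def stepFn {A : Type*} (w : FreeMagma A) : ℕ :=
  sInf { t : ℕ | ∃ u : FreeMagma A, IsSubword u w ∧ wlen u + 2 * t + 1 = wlen w }

/-- `w` is a `p`-step word for the generating set `S`. -/
def IsPStepWord (F : Type*) {A : Type*} [Field F] [NonUnitalNonAssocRing A] [Module F A]
    (S : Set A) (w : FreeMagma A) (p : ℕ) : Prop :=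
  HasLeavesIn S w ∧ Irred F S w ∧ KBounded 3 w ∧ stepFn w = p ∧
    ∀ v : FreeMagma A, HasLeavesIn S v → Irred F S v → KBounded 3 v → wlen v = wlen w →
      p ≤ stepFn v

/-- `A` is `k`-round: `x · v = 0` for every product `v` of `k` elements. -/
def IsKRound (A : Type*) [NonUnitalNonAssocRing A] (k : ℕ) : Prop :=
  ∀ (x : A) (w : FreeMagma A), wlen w = k → x * evalA w = 0

/-- `A` is `k`-based. -/
def IsKBased (A : Type*) [NonUnitalNonAssocRing A] (k : ℕ) : Prop :=
  ∀ (x : A) (u v : FreeMagma A), wlen u + wlen v = k →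
    x * (evalA u * evalA v) = evalA u * (x * evalA v) ∧
      (evalA u * evalA v) * x = (evalA u * x) * evalA v

/-- The set `P(x,y,z)`. -/
def Pset {A : Type*} [Mul A] (x y z : A) : Set A :=
  {(x*z)*y, (z*x)*y, (y*z)*x, (z*y)*x, x*(z*y), x*(y*z), y*(x*z), y*(z*x),
    x*y, y*x, x*z, z*x, y*z, z*y, x, y, z}

/-- The set `Q_l(x,y,z)`. -/
def Qlset {A : Type*} [Mul A] (x y z : A) : Set A :=
  {x*(z*y), x*(y*z), y*(x*z), y*(z*x), x*y, y*x, x*z, z*x, y*z, z*y, x, y, z}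

/-- The set `Q_r(x,y,z)`. -/
def Qrset {A : Type*} [Mul A] (x y z : A) : Set A :=
  {(x*z)*y, (z*x)*y, (y*z)*x, (z*y)*x, x*y, y*x, x*z, z*x, y*z, z*y, x, y, z}

/-- `A` is a mixing algebra. -/
def IsMixingAlg (F A : Type*) [Field F] [NonUnitalNonAssocRing A] [Module F A] : Prop :=
  ∀ x y z : A, (x*y)*z ∈ Submodule.span F (Pset x y z) ∧
    z*(x*y) ∈ Submodule.span F (Pset x y z)

/-- `A` is a sliding algebra. -/
def IsSlidingAlg (F A : Type*) [Field F] [NonUnitalNonAssocRing A] [Module F A] : Prop :=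
  (∀ x y z : A, z*(x*y) ∈ Submodule.span F (Qrset x y z)) ∨
  (∀ x y z : A, (x*y)*z ∈ Submodule.span F (Qlset x y z))


-- ===== auxiliary machinery =====
section AuxBasic
variable {α β : Type*}

theorem leafList_mul (u v : FreeMagma α) :
    leafList (u * v) = leafList u ++ leafList v := rfl

theorem wlen_mul (u v : FreeMagma α) : wlen (u * v) = wlen u + wlen v := by
  simp [wlen, leafList_mul]

theorem wlen_pos (w : FreeMagma α) : 1 ≤ wlen w := by
  induction w with
  | ih1 a => simp [wlen, leafList]
  | ih2 x y ihx ihy => rw [wlen_mul]; omega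

theorem evalA_mul [Mul β] (u v : FreeMagma β) :
    evalA (u * v) = evalA u * evalA v := map_mul _ _ _

theorem evalA_of [Mul β] (a : β) : evalA (FreeMagma.of a) = a := rfl

theorem evalVar_mul [Mul β] {n : ℕ} (f : Fin n → β) (u v : FreeMagma (Fin n)) :
    evalVar f (u * v) = evalVar f u * evalVar f v := map_mul _ _ _

theorem evalVar_of [Mul β] {n : ℕ} (f : Fin n → β) (i : Fin n) :
    evalVar f (FreeMagma.of i) = f i := rfl

theorem evalA_lift [Mul β] {n : ℕ} (σ : Fin n → FreeMagma β)
    (z : FreeMagma (Fin n)) :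
    evalA (FreeMagma.lift σ z) = evalVar (fun i => evalA (σ i)) z := by
  induction z with
  | ih1 i => simp [evalVar]
  | ih2 x y ihx ihy => rw [map_mul, evalA_mul, ihx, ihy, evalVar_mul]

theorem leafList_lift' (σ : α → FreeMagma β) (z : FreeMagma α) :
    leafList ((FreeMagma.lift σ : FreeMagma α →ₙ* FreeMagma β) z)
      = (leafList z).flatMap (fun i => leafList (σ i)) := by
  induction z with
  | ih1 i => simp [leafList]
  | ih2 x y ihx ihy =>
      rw [map_mul, leafList_mul, ihx, ihy]
      simp [leafList]

theorem wlen_lift (σ : α → FreeMagma β) (z : FreeMagma α) :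
    wlen ((FreeMagma.lift σ : FreeMagma α →ₙ* FreeMagma β) z)
      = ((leafList z).map fun i => wlen (σ i)).sum := by
  rw [wlen, leafList_lift', List.length_flatMap]
  rfl

theorem lift_congr {σ τ : α → FreeMagma β} :
    ∀ z : FreeMagma α, (∀ i ∈ leafList z, σ i = τ i) →
      FreeMagma.lift σ z = FreeMagma.lift τ z := by
  intro z
  induction z with
  | ih1 i => intro h; simp only [FreeMagma.lift_of]; exact h i (by simp [leafList])
  | ih2 x y ihx ihy =>
      intro h
      rw [map_mul, map_mul, ihx, ihy]
      · intro i hi; exact h i (by rw [leafList_mul]; exact List.mem_append_right _ hi)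
      · intro i hi; exact h i (by rw [leafList_mul]; exact List.mem_append_left _ hi)

theorem leafList_singleton {z : FreeMagma α} {i : α}
    (h : leafList z = [i]) : z = FreeMagma.of i := by
  cases z with
  | of a => simp [leafList] at h; rw [h]
  | mul x y =>
      exfalso
      have hm := wlen_mul x y
      have h1 := wlen_pos x; have h2 := wlen_pos y
      have h3 : wlen (x * y) = 1 := by
        show (leafList (x * y)).length = 1
        rw [show leafList (x * y) = [i] from h]; rfl
      omega

theorem wlen_eq_sum {n : ℕ} (σ : Fin n → FreeMagma α) (z : FreeMagma (Fin n))
    (hnd : (leafList z).Nodup) :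
    wlen ((FreeMagma.lift σ : FreeMagma (Fin n) →ₙ* FreeMagma α) z)
      = ∑ i ∈ (leafList z).toFinset, wlen (σ i) := by
  rw [wlen_lift, List.sum_toFinset _ hnd]

theorem toFinset_eq_of_multiset {n : ℕ} {L : List (Fin n)} {T : Finset (Fin n)}
    (h : (L : Multiset (Fin n)) = T.val) : L.toFinset = T := by
  ext i
  simp only [List.mem_toFinset, ← Finset.mem_def] at *
  constructor
  · intro hi
    have : i ∈ (L : Multiset (Fin n)) := by simpa using hi
    rw [h] at this; exact this
  · intro hi
    have : i ∈ (L : Multiset (Fin n)) := by rw [h]; exact hi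
    simpa using this

theorem kbounded_of (k : ℕ) (a : α) : KBounded k (FreeMagma.of a) :=
  ⟨[], IsSprout.single a, by simp⟩

theorem kbounded_mul_left {k : ℕ} {u v : FreeMagma α} (h1 : wlen u ≤ wlen v)
    (h2 : wlen u < k) (h3 : KBounded k v) : KBounded k (u * v) := by
  obtain ⟨L, hL, hlt⟩ := h3
  exact ⟨u :: L, IsSprout.cons_l h1 hL, by
    intro x hx
    rcases List.mem_cons.mp hx with h | h
    · rw [h]; exact h2
    · exact hlt x h⟩

theorem kbounded_mul_right {k : ℕ} {u v : FreeMagma α} (h1 : wlen v ≤ wlen u)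
    (h2 : wlen v < k) (h3 : KBounded k u) : KBounded k (u * v) := by
  obtain ⟨L, hL, hlt⟩ := h3
  exact ⟨v :: L, IsSprout.cons_r h1 hL, by
    intro x hx
    rcases List.mem_cons.mp hx with h | h
    · rw [h]; exact h2
    · exact hlt x h⟩

/-- Decomposition of a word into `T.card` pieces, as a multilinear word. -/
theorem decomp {m : ℕ} :
    ∀ (c : ℕ) (T : Finset (Fin m)) (v : FreeMagma α), T.card = c → T.Nonempty →
      T.card ≤ wlen v →
      ∃ (U : FreeMagma (Fin m)) (σ : Fin m → FreeMagma α),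
        IsMultilinearOn T U ∧
        (FreeMagma.lift σ : FreeMagma (Fin m) →ₙ* FreeMagma α) U = v ∧
        ∀ i ∈ T, ∀ a ∈ leafList (σ i), a ∈ leafList v := by
  intro c
  induction c using Nat.strong_induction_on with | _ c IHc =>
  intro T v hc hne hcard
  by_cases h1 : T.card = 1
  · obtain ⟨i, hi⟩ := Finset.card_eq_one.mp h1
    subst hi
    refine ⟨FreeMagma.of i, fun _ => v, ?_, ?_, ?_⟩
    · show ((leafList (FreeMagma.of i) : List (Fin m)) : Multiset (Fin m)) = _
      simp [leafList]
    · exact FreeMagma.lift_of _ _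
    · intro i _ a ha; exact ha
  · have h2 : 2 ≤ T.card := by
      have := Finset.card_pos.mpr hne; omega
    cases v with
    | of a =>
        exfalso
        have : wlen (FreeMagma.of a) = 1 := rfl
        omega
    | mul v1 v2 =>
      rw [show FreeMagma.mul v1 v2 = v1 * v2 from rfl] at *
      have hw : wlen v1 + wlen v2 = wlen (v1 * v2) := (wlen_mul v1 v2).symm
      have hp1 := wlen_pos v1; have hp2 := wlen_pos v2
      set c1 := min (wlen v1) (T.card - 1) with hc1
      have hc1le : c1 ≤ T.card := by omega
      obtain ⟨T1, hT1sub, hT1card⟩ := Finset.exists_subset_card_eq hc1le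
      set T2 := T \ T1 with hT2
      have hT2card : T2.card = T.card - c1 := by
        rw [hT2, Finset.card_sdiff_of_subset hT1sub, hT1card]
      have hc1pos : 1 ≤ c1 := by omega
      have hc1v1 : c1 ≤ wlen v1 := min_le_left _ _
      have hT2v2 : T2.card ≤ wlen v2 := by
        rw [hT2card]; omega
      have hT1ne : T1.Nonempty := Finset.card_pos.mp (by omega)
      have hT2ne : T2.Nonempty := Finset.card_pos.mp (by omega)
      obtain ⟨U1, σ1, hml1, hlift1, hsub1⟩ :=
        IHc c1 (by omega) T1 v1 hT1card hT1ne (hT1card ▸ hc1v1)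
      obtain ⟨U2, σ2, hml2, hlift2, hsub2⟩ :=
        IHc (T.card - c1) (by omega) T2 v2 hT2card hT2ne (hT2card ▸ hT2v2)
      classical
      refine ⟨U1 * U2, fun i => if i ∈ T1 then σ1 i else σ2 i, ?_, ?_, ?_⟩
      · show ((leafList (U1 * U2) : List (Fin m)) : Multiset (Fin m)) = T.val
        rw [leafList_mul]
        rw [show ((leafList U1 ++ leafList U2 : List (Fin m)) : Multiset (Fin m))
            = ((leafList U1 : List (Fin m)) : Multiset (Fin m))
              + ((leafList U2 : List (Fin m)) : Multiset (Fin m)) from by simp]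
        rw [show ((leafList U1 : List (Fin m)) : Multiset (Fin m)) = T1.val from hml1,
            show ((leafList U2 : List (Fin m)) : Multiset (Fin m)) = T2.val from hml2]
        rw [hT2, Finset.sdiff_val]
        exact add_tsub_cancel_of_le (by exact Finset.val_le_iff.mpr hT1sub)
      · rw [map_mul]
        have e1 : (FreeMagma.lift (fun i => if i ∈ T1 then σ1 i else σ2 i) :
            FreeMagma (Fin m) →ₙ* FreeMagma α) U1 = FreeMagma.lift σ1 U1 := by
          apply lift_congr
          intro i hi
          have : i ∈ T1 := by
            have : i ∈ ((leafList U1 : List (Fin m)) : Multiset (Fin m)) := by simpa using hi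
            rw [hml1] at this; exact this
          simp [this]
        have e2 : (FreeMagma.lift (fun i => if i ∈ T1 then σ1 i else σ2 i) :
            FreeMagma (Fin m) →ₙ* FreeMagma α) U2 = FreeMagma.lift σ2 U2 := by
          apply lift_congr
          intro i hi
          have hiT2 : i ∈ T2 := by
            have : i ∈ ((leafList U2 : List (Fin m)) : Multiset (Fin m)) := by simpa using hi
            rw [hml2] at this; exact this
          have : i ∉ T1 := (Finset.mem_sdiff.mp hiT2).2
          simp [this]
        rw [e1, e2, hlift1, hlift2]
      · intro i hiT a ha
        by_cases hiT1 : i ∈ T1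
        · simp only [if_pos hiT1] at ha
          rw [leafList_mul]
          exact List.mem_append_left _ (hsub1 i hiT1 a ha)
        · simp only [if_neg hiT1] at ha
          rw [leafList_mul]
          exact List.mem_append_right _
            (hsub2 i (Finset.mem_sdiff.mpr ⟨hiT, hiT1⟩) a ha)

end AuxBasic

theorem leafList_ne_nil {α : Type*} (w : FreeMagma α) : leafList w ≠ [] := by
  have h := wlen_pos w
  intro hnil
  rw [wlen, hnil] at h
  simp at h

section Machinery
variable {F A : Type*} [Field F] [NonUnitalNonAssocRing A] [Module F A]
  [SMulCommClass F A A] [IsScalarTower F A A]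

/-- The set of values of `S`-words which are irreducible, `k`-bounded and of length ≤ `n`. -/
def GdSet (F : Type*) {A : Type*} [Field F] [NonUnitalNonAssocRing A] [Module F A]
    (k : ℕ) (S : Set A) (n : ℕ) : Set A :=
  {a | ∃ v : FreeMagma A,
    HasLeavesIn S v ∧ Irred F S v ∧ KBounded k v ∧ wlen v ≤ n ∧ evalA v = a}

theorem GdSet_mono {k : ℕ} {S : Set A} {m n : ℕ} (h : m ≤ n) :
    GdSet F k S m ⊆ GdSet F k S n := by
  rintro a ⟨v, h1, h2, h3, h4, h5⟩
  exact ⟨v, h1, h2, h3, h4.trans h, h5⟩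

theorem mul_mem_of_span {s t : Set A} {P : Submodule F A} {a b : A}
    (ha : a ∈ Submodule.span F s) (hb : b ∈ Submodule.span F t)
    (h : ∀ x ∈ s, ∀ y ∈ t, x * y ∈ P) : a * b ∈ P := by
  induction ha using Submodule.span_induction with
  | mem x hx =>
    induction hb using Submodule.span_induction with
    | mem y hy => exact h x hx y hy
    | zero => rw [mul_zero]; exact P.zero_mem
    | add y z _ _ ihy ihz => rw [mul_add]; exact P.add_mem ihy ihz
    | smul c y _ ih => rw [mul_smul_comm]; exact P.smul_mem c ih
  | zero => rw [zero_mul]; exact P.zero_mem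
  | add x y _ _ ihx ihy => rw [add_mul]; exact P.add_mem ihx ihy
  | smul c x _ ih => rw [smul_mul_assoc]; exact P.smul_mem c ih

theorem mixhelper (k : ℕ) (hk : 2 ≤ k) (S : Set A) (n μ : ℕ)
    (IHmain : ∀ n' < n, ∀ w : FreeMagma A, HasLeavesIn S w → wlen w ≤ n' →
      evalA w ∈ Submodule.span F (GdSet F k S n'))
    (IHC : ∀ u v : FreeMagma A,
      HasLeavesIn S u → Irred F S u → KBounded k u →
      HasLeavesIn S v → Irred F S v → KBounded k v →
      wlen u + wlen v ≤ n → min (wlen u) (wlen v) < μ →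
      evalA u * evalA v ∈ Submodule.span F (GdSet F k S n))
    (σ' : Fin (k + 1) → FreeMagma A) (hlv : ∀ i, HasLeavesIn S (σ' i))
    (herase : ∑ i ∈ Finset.univ.erase 0, wlen (σ' i) ≤ μ)
    (htot : ∑ i, wlen (σ' i) ≤ n)
    (z : FreeMagma (Fin (k + 1))) (hz : InD0 z) :
    evalA ((FreeMagma.lift σ' : FreeMagma (Fin (k+1)) →ₙ* FreeMagma A) z) ∈
      Submodule.span F (GdSet F k S n) := by
  classical
  obtain ⟨hnd, hexc⟩ := hz
  have hndl : (leafList z).Nodup := Multiset.coe_nodup.mp hnd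
  have hlvS : ∀ z' : FreeMagma (Fin (k+1)),
      HasLeavesIn S ((FreeMagma.lift σ' : FreeMagma (Fin (k+1)) →ₙ* FreeMagma A) z') := by
    intro z' a ha
    rw [leafList_lift'] at ha
    obtain ⟨i, _, ha⟩ := List.mem_flatMap.mp ha
    exact hlv i a ha
  by_cases huniv : (leafList z).toFinset = Finset.univ
  case neg =>
    obtain ⟨j, hj⟩ : ∃ j, j ∉ (leafList z).toFinset := by
      by_contra h
      push_neg at h
      exact huniv (Finset.eq_univ_iff_forall.mpr h)
    have hlt : wlen ((FreeMagma.lift σ' : FreeMagma (Fin (k+1)) →ₙ* FreeMagma A) z) < n := by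
      rw [wlen_eq_sum σ' z hndl]
      have hsub : (leafList z).toFinset ⊆ Finset.univ.erase j := fun i hi =>
        Finset.mem_erase.mpr ⟨fun he => hj (he ▸ hi), Finset.mem_univ i⟩
      have h1 : ∑ i ∈ (leafList z).toFinset, wlen (σ' i)
          ≤ ∑ i ∈ Finset.univ.erase j, wlen (σ' i) :=
        Finset.sum_le_sum_of_subset hsub
      have h2 : wlen (σ' j) + ∑ i ∈ Finset.univ.erase j, wlen (σ' i) = ∑ i, wlen (σ' i) :=
        Finset.add_sum_erase _ (fun i => wlen (σ' i)) (Finset.mem_univ j)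
      have h3 := wlen_pos (σ' j)
      omega
    exact Submodule.span_mono (GdSet_mono hlt.le) (IHmain _ hlt _ (hlvS z) le_rfl)
  case pos =>
    have hmulti : ((leafList z : List (Fin (k+1))) : Multiset (Fin (k+1)))
        = (Finset.univ : Finset (Fin (k+1))).val := by
      have h1 := congrArg Finset.val huniv
      rwa [List.toFinset, Multiset.toFinset_val, Multiset.dedup_eq_self.mpr hnd] at h1
    cases z with
    | of i =>
        exfalso
        have hcard := congrArg Multiset.card hmulti
        simp [leafList] at hcard
        omega
    | mul z1 z2 =>
      have hz12 : (FreeMagma.mul z1 z2 : FreeMagma (Fin (k+1))) = z1 * z2 := rfl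
      rw [hz12] at hmulti hndl ⊢
      rw [leafList_mul] at hmulti hndl
      obtain ⟨hnd1, hnd2, hdisj⟩ := List.nodup_append.mp hndl
      have h0mem : (0 : Fin (k+1)) ∈ leafList z1 ++ leafList z2 := by
        have h := Finset.mem_univ (0 : Fin (k+1))
        rw [← Finset.mem_def.symm] at h
        have : (0 : Fin (k+1)) ∈ ((leafList z1 ++ leafList z2 : List (Fin (k+1))) :
            Multiset (Fin (k+1))) := by
          rw [hmulti]; exact h
        simpa using this
      set t1 := (FreeMagma.lift σ' : FreeMagma (Fin (k+1)) →ₙ* FreeMagma A) z1 with ht1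
      set t2 := (FreeMagma.lift σ' : FreeMagma (Fin (k+1)) →ₙ* FreeMagma A) z2 with ht2
      have hsum1 : wlen t1 = ∑ i ∈ (leafList z1).toFinset, wlen (σ' i) :=
        wlen_eq_sum σ' z1 hnd1
      have hsum2 : wlen t2 = ∑ i ∈ (leafList z2).toFinset, wlen (σ' i) :=
        wlen_eq_sum σ' z2 hnd2
      have hunion : (leafList z1).toFinset ∪ (leafList z2).toFinset = Finset.univ := by
        rw [← List.toFinset_append]; exact huniv
      have hdisjF : Disjoint (leafList z1).toFinset (leafList z2).toFinset := by
        rw [List.disjoint_toFinset_iff_disjoint]; exact fun a ha hb => hdisj a ha a hb rfl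
      have htot12 : wlen t1 + wlen t2 = ∑ i, wlen (σ' i) := by
        rw [hsum1, hsum2, ← Finset.sum_union hdisjF, hunion]
      have hp1 := wlen_pos t1
      have hp2 := wlen_pos t2
      have hgoal : evalA ((FreeMagma.lift σ' : FreeMagma (Fin (k+1)) →ₙ* FreeMagma A) (z1 * z2))
          = evalA t1 * evalA t2 := by rw [map_mul, evalA_mul]
      rw [hgoal]
      rcases List.mem_append.mp h0mem with h0 | h0
      · -- 0 among leaves of z1 : the small side is t2
        have hexj : ∃ j ∈ leafList z1, j ≠ 0 := by
          by_contra hcon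
          push_neg at hcon
          have hlen1 : (leafList z1).length = 1 := by
            have hsub0 : (leafList z1).toFinset ⊆ {0} := fun i hi =>
              Finset.mem_singleton.mpr (hcon i (List.mem_toFinset.mp hi))
            have hcle := Finset.card_le_card hsub0
            rw [List.toFinset_card_of_nodup hnd1, Finset.card_singleton] at hcle
            have := wlen_pos z1
            rw [wlen] at this
            omega
          obtain ⟨a, hla⟩ := List.length_eq_one_iff.mp hlen1
          have ha0 : a = 0 := hcon a (by rw [hla]; simp)
          have hz1 : z1 = FreeMagma.of 0 := leafList_singleton (by rw [hla, ha0])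
          apply hexc
          refine ⟨z2, ?_, Or.inl (by rw [hz1]; rfl)⟩
          show ((leafList z2 : List (Fin (k+1))) : Multiset (Fin (k+1)))
            = (Finset.univ.erase (0 : Fin (k+1))).val
          rw [hz1] at hmulti
          have hkey : ((leafList (FreeMagma.of (0 : Fin (k+1))) ++ leafList z2 :
              List (Fin (k+1))) : Multiset (Fin (k+1)))
              = (0 : Fin (k+1)) ::ₘ (leafList z2 : List (Fin (k+1))) := by
            simp [leafList]
          rw [hkey] at hmulti
          rw [Finset.erase_val, ← hmulti, Multiset.erase_cons_head]
        obtain ⟨j, hjmem, hjne⟩ := hexj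
        have ht2sub : (leafList z2).toFinset ⊆ (Finset.univ.erase (0 : Fin (k+1))).erase j := by
          intro i hi
          have hi2 := List.mem_toFinset.mp hi
          refine Finset.mem_erase.mpr ⟨?_, Finset.mem_erase.mpr ⟨?_, Finset.mem_univ i⟩⟩
          · intro he; exact hdisj _ hjmem _ hi2 he.symm
          · intro he; exact hdisj _ h0 _ hi2 he.symm
        have hjmem' : j ∈ Finset.univ.erase (0 : Fin (k+1)) :=
          Finset.mem_erase.mpr ⟨hjne, Finset.mem_univ j⟩
        have hlt2 : wlen t2 < μ := by
          have h1 : ∑ i ∈ (leafList z2).toFinset, wlen (σ' i)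
              ≤ ∑ i ∈ (Finset.univ.erase (0 : Fin (k+1))).erase j, wlen (σ' i) :=
            Finset.sum_le_sum_of_subset ht2sub
          have h2 : wlen (σ' j) + ∑ i ∈ (Finset.univ.erase (0 : Fin (k+1))).erase j, wlen (σ' i)
              = ∑ i ∈ Finset.univ.erase (0 : Fin (k+1)), wlen (σ' i) :=
            Finset.add_sum_erase _ (fun i => wlen (σ' i)) hjmem'
          have h3 := wlen_pos (σ' j)
          omega
        have hm1 := IHmain (wlen t1) (by omega) t1 (hlvS z1) le_rfl
        have hm2 := IHmain (wlen t2) (by omega) t2 (hlvS z2) le_rfl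
        refine mul_mem_of_span hm1 hm2 ?_
        rintro x ⟨q1, hq1S, hq1I, hq1B, hq1len, rfl⟩ y ⟨q2, hq2S, hq2I, hq2B, hq2len, rfl⟩
        exact IHC q1 q2 hq1S hq1I hq1B hq2S hq2I hq2B (by omega)
          (lt_of_le_of_lt (min_le_right _ _) (by omega))
      · -- 0 among leaves of z2 : the small side is t1
        have hexj : ∃ j ∈ leafList z2, j ≠ 0 := by
          by_contra hcon
          push_neg at hcon
          have hlen1 : (leafList z2).length = 1 := by
            have hsub0 : (leafList z2).toFinset ⊆ {0} := fun i hi =>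
              Finset.mem_singleton.mpr (hcon i (List.mem_toFinset.mp hi))
            have hcle := Finset.card_le_card hsub0
            rw [List.toFinset_card_of_nodup hnd2, Finset.card_singleton] at hcle
            have := wlen_pos z2
            rw [wlen] at this
            omega
          obtain ⟨a, hla⟩ := List.length_eq_one_iff.mp hlen1
          have ha0 : a = 0 := hcon a (by rw [hla]; simp)
          have hz2 : z2 = FreeMagma.of 0 := leafList_singleton (by rw [hla, ha0])
          apply hexc
          refine ⟨z1, ?_, Or.inr (by rw [hz2]; rfl)⟩
          show ((leafList z1 : List (Fin (k+1))) : Multiset (Fin (k+1)))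
            = (Finset.univ.erase (0 : Fin (k+1))).val
          rw [hz2] at hmulti
          have hkey : ((leafList z1 ++ leafList (FreeMagma.of (0 : Fin (k+1))) :
              List (Fin (k+1))) : Multiset (Fin (k+1)))
              = (0 : Fin (k+1)) ::ₘ (leafList z1 : List (Fin (k+1))) := by
            show ((leafList z1 ++ [(0 : Fin (k+1))] : List (Fin (k+1))) :
              Multiset (Fin (k+1))) = _
            calc ((leafList z1 ++ [(0 : Fin (k+1))] : List (Fin (k+1))) :
                Multiset (Fin (k+1)))
                = (leafList z1 : List (Fin (k+1)))
                  + ([(0 : Fin (k+1))] : List (Fin (k+1))) := Multiset.coe_add _ _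
              _ = ([(0 : Fin (k+1))] : List (Fin (k+1)))
                  + ((leafList z1 : List (Fin (k+1))) : Multiset (Fin (k+1))) := add_comm _ _
              _ = (0 : Fin (k+1)) ::ₘ (leafList z1 : List (Fin (k+1))) := by
                    rw [Multiset.coe_singleton, Multiset.singleton_add]
          rw [hkey] at hmulti
          rw [Finset.erase_val, ← hmulti, Multiset.erase_cons_head]
        obtain ⟨j, hjmem, hjne⟩ := hexj
        have ht1sub : (leafList z1).toFinset ⊆ (Finset.univ.erase (0 : Fin (k+1))).erase j := by
          intro i hi
          have hi2 := List.mem_toFinset.mp hi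
          refine Finset.mem_erase.mpr ⟨?_, Finset.mem_erase.mpr ⟨?_, Finset.mem_univ i⟩⟩
          · intro he; exact hdisj _ hi2 _ hjmem he
          · intro he; exact hdisj _ hi2 _ h0 he
        have hjmem' : j ∈ Finset.univ.erase (0 : Fin (k+1)) :=
          Finset.mem_erase.mpr ⟨hjne, Finset.mem_univ j⟩
        have hlt1 : wlen t1 < μ := by
          have h1 : ∑ i ∈ (leafList z1).toFinset, wlen (σ' i)
              ≤ ∑ i ∈ (Finset.univ.erase (0 : Fin (k+1))).erase j, wlen (σ' i) :=
            Finset.sum_le_sum_of_subset ht1sub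
          have h2 : wlen (σ' j) + ∑ i ∈ (Finset.univ.erase (0 : Fin (k+1))).erase j, wlen (σ' i)
              = ∑ i ∈ Finset.univ.erase (0 : Fin (k+1)), wlen (σ' i) :=
            Finset.add_sum_erase _ (fun i => wlen (σ' i)) hjmem'
          have h3 := wlen_pos (σ' j)
          omega
        have hm1 := IHmain (wlen t1) (by omega) t1 (hlvS z1) le_rfl
        have hm2 := IHmain (wlen t2) (by omega) t2 (hlvS z2) le_rfl
        refine mul_mem_of_span hm1 hm2 ?_
        rintro x ⟨q1, hq1S, hq1I, hq1B, hq1len, rfl⟩ y ⟨q2, hq2S, hq2I, hq2B, hq2len, rfl⟩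
        exact IHC q1 q2 hq1S hq1I hq1B hq2S hq2I hq2B (by omega)
          (lt_of_le_of_lt (min_le_left _ _) (by omega))

end Machinery

section Machinery2
variable {F A : Type*} [Field F] [NonUnitalNonAssocRing A] [Module F A]
  [SMulCommClass F A A] [IsScalarTower F A A]

theorem claimC (k : ℕ) (hk : 2 ≤ k) (hmix : IsKMixing F A k) (S : Set A) (n : ℕ)
    (IHmain : ∀ n' < n, ∀ w : FreeMagma A, HasLeavesIn S w → wlen w ≤ n' →
      evalA w ∈ Submodule.span F (GdSet F k S n')) :
    ∀ (μ : ℕ) (u v : FreeMagma A),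
      HasLeavesIn S u → Irred F S u → KBounded k u →
      HasLeavesIn S v → Irred F S v → KBounded k v →
      wlen u + wlen v ≤ n → min (wlen u) (wlen v) ≤ μ →
      evalA u * evalA v ∈ Submodule.span F (GdSet F k S n) := by
  classical
  intro μ
  induction μ using Nat.strong_induction_on with | _ μ IHμ =>
  intro u v huS huI huB hvS hvI hvB htot hmin
  by_cases hsm : min (wlen u) (wlen v) < k
  · -- base case: u * v is k-bounded
    have hleaves : HasLeavesIn S (u * v) := by
      intro a ha
      rw [leafList_mul] at ha
      rcases List.mem_append.mp ha with h | h
      exacts [huS a h, hvS a h]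
    have hkb : KBounded k (u * v) := by
      rcases le_total (wlen u) (wlen v) with h | h
      · exact kbounded_mul_left h (by rw [min_eq_left h] at hsm; exact hsm) hvB
      · exact kbounded_mul_right h (by rw [min_eq_right h] at hsm; exact hsm) huB
    by_cases hirr : Irred F S (u * v)
    · have hmem : evalA (u * v) ∈ GdSet F k S n :=
        ⟨u * v, hleaves, hirr, hkb, by rw [wlen_mul]; exact htot, rfl⟩
      rw [evalA_mul] at hmem
      exact Submodule.subset_span hmem
    · rw [Irred] at hirr
      push_neg at hirr
      obtain ⟨m, hmlt, hmem⟩ := hirr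
      rw [wlen_mul] at hmlt
      rw [evalA_mul] at hmem
      have hp1 := wlen_pos u; have hp2 := wlen_pos v
      have hLs : Lspan F S m ≤ Submodule.span F (GdSet F k S n) := by
        rw [Lspan]
        apply Submodule.span_le.mpr
        rintro a ⟨t, htS, htlen, rfl⟩
        exact Submodule.span_mono (GdSet_mono (show m ≤ n by omega))
          (IHmain m (by omega) t htS htlen)
      exact hLs hmem
  · push_neg at hsm
    rcases lt_or_eq_of_le hmin with hlt | heq
    · exact IHμ (min (wlen u) (wlen v)) hlt u v huS huI huB hvS hvI hvB htot le_rfl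
    · -- mixing step : min (wlen u) (wlen v) = μ ≥ k
      have hTcard : (Finset.univ.erase (0 : Fin (k+1))).card = k := by
        rw [Finset.card_erase_of_mem (Finset.mem_univ _), Finset.card_univ, Fintype.card_fin]
        omega
      have hTne : (Finset.univ.erase (0 : Fin (k+1))).Nonempty :=
        Finset.card_pos.mp (by omega)
      have hIHC : ∀ u' v' : FreeMagma A,
          HasLeavesIn S u' → Irred F S u' → KBounded k u' →
          HasLeavesIn S v' → Irred F S v' → KBounded k v' →
          wlen u' + wlen v' ≤ n → min (wlen u') (wlen v') < μ →
          evalA u' * evalA v' ∈ Submodule.span F (GdSet F k S n) := by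
        intro u' v' h1 h2 h3 h4 h5 h6 h7 h8
        exact IHμ (min (wlen u') (wlen v')) h8 u' v' h1 h2 h3 h4 h5 h6 h7 le_rfl
      rcases le_total (wlen u) (wlen v) with hle | hle
      · -- wlen u ≤ wlen v : decompose u, x := evalA v, pattern U * z₀
        have hmin_eq : wlen u = μ := by rw [min_eq_left hle] at heq; exact heq
        have hku : k ≤ wlen u := by rw [min_eq_left hle] at hsm; exact hsm
        obtain ⟨U, σ, hml, hlift, hsub⟩ := decomp (Finset.univ.erase (0 : Fin (k+1))).card
          (Finset.univ.erase (0 : Fin (k+1))) u rfl hTne (by rw [hTcard]; exact hku)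
        set σ' : Fin (k+1) → FreeMagma A := fun i => if i = 0 then v else σ i with hσ'
        have hσ'0 : σ' 0 = v := by simp [hσ']
        have hσ'ne : ∀ i : Fin (k+1), i ≠ 0 → σ' i = σ i := by
          intro i hi; simp [hσ', hi]
        have hUleaf : ∀ i ∈ leafList U, i ∈ Finset.univ.erase (0 : Fin (k+1)) := by
          intro i hi
          have h2 : i ∈ ((leafList U : List (Fin (k+1))) : Multiset (Fin (k+1))) := by
            simpa using hi
          rw [show ((leafList U : List (Fin (k+1))) : Multiset (Fin (k+1)))
            = (Finset.univ.erase (0 : Fin (k+1))).val from hml] at h2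
          exact h2
        have hliftU : (FreeMagma.lift σ' : FreeMagma (Fin (k+1)) →ₙ* FreeMagma A) U = u := by
          rw [← hlift]
          exact lift_congr U fun i hi => hσ'ne i (Finset.mem_erase.mp (hUleaf i hi)).1
        set f : Fin (k+1) → A := fun i => evalA (σ' i) with hf
        have hconsf : (Fin.cons (evalA v) (fun i : Fin k => evalA (σ' i.succ)) :
            Fin (k+1) → A) = f := by
          funext i
          refine Fin.cases ?_ ?_ i
          · rw [Fin.cons_zero]
            simp [hf, hσ'0]
          · intro j; rw [Fin.cons_succ]
        have hkey := hmix (evalA v) (fun i : Fin k => evalA (σ' i.succ))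
          (U * FreeMagma.of 0) ⟨U, hml, Or.inr rfl⟩
        rw [hconsf] at hkey
        have heval : evalVar f (U * FreeMagma.of 0) = evalA u * evalA v := by
          rw [evalVar_mul, evalVar_of]
          rw [show evalVar f U
            = evalA ((FreeMagma.lift σ' : FreeMagma (Fin (k+1)) →ₙ* FreeMagma A) U)
            from (evalA_lift σ' U).symm, hliftU]
          rw [show f 0 = evalA v from by rw [hf]; simp [hσ'0]]
        rw [heval] at hkey
        -- sums
        have hndU : (leafList U).Nodup := by
          have := (Finset.univ.erase (0 : Fin (k+1))).nodup
          rw [← hml] at this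
          exact Multiset.coe_nodup.mp this
        have hUtofin : (leafList U).toFinset = Finset.univ.erase (0 : Fin (k+1)) :=
          toFinset_eq_of_multiset hml
        have hwu : wlen u = ∑ i ∈ Finset.univ.erase (0 : Fin (k+1)), wlen (σ' i) := by
          rw [← hliftU, wlen_eq_sum σ' U hndU, hUtofin]
        have herase : ∑ i ∈ Finset.univ.erase (0 : Fin (k+1)), wlen (σ' i) ≤ μ := by
          rw [← hwu]; omega
        have htotsum : ∑ i, wlen (σ' i) ≤ n := by
          have h2 : wlen (σ' 0) + ∑ i ∈ Finset.univ.erase (0 : Fin (k+1)), wlen (σ' i)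
              = ∑ i, wlen (σ' i) :=
            Finset.add_sum_erase _ (fun i => wlen (σ' i)) (Finset.mem_univ 0)
          rw [hσ'0] at h2
          omega
        have hlvσ : ∀ i, HasLeavesIn S (σ' i) := by
          intro i
          by_cases hi : i = 0
          · rw [hi, hσ'0]; exact hvS
          · rw [hσ'ne i hi]
            intro a ha
            exact huS a (hsub i (Finset.mem_erase.mpr ⟨hi, Finset.mem_univ i⟩) a ha)
        refine Submodule.span_le.mpr ?_ hkey
        rintro a ⟨z, hz, rfl⟩
        rw [show evalVar f z
          = evalA ((FreeMagma.lift σ' : FreeMagma (Fin (k+1)) →ₙ* FreeMagma A) z)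
          from (evalA_lift σ' z).symm]
        exact mixhelper k hk S n μ IHmain hIHC σ' hlvσ herase htotsum z hz
      · -- wlen v ≤ wlen u : decompose v, x := evalA u, pattern z₀ * U
        have hmin_eq : wlen v = μ := by rw [min_eq_right hle] at heq; exact heq
        have hkv : k ≤ wlen v := by rw [min_eq_right hle] at hsm; exact hsm
        obtain ⟨U, σ, hml, hlift, hsub⟩ := decomp (Finset.univ.erase (0 : Fin (k+1))).card
          (Finset.univ.erase (0 : Fin (k+1))) v rfl hTne (by rw [hTcard]; exact hkv)
        set σ' : Fin (k+1) → FreeMagma A := fun i => if i = 0 then u else σ i with hσ'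
        have hσ'0 : σ' 0 = u := by simp [hσ']
        have hσ'ne : ∀ i : Fin (k+1), i ≠ 0 → σ' i = σ i := by
          intro i hi; simp [hσ', hi]
        have hUleaf : ∀ i ∈ leafList U, i ∈ Finset.univ.erase (0 : Fin (k+1)) := by
          intro i hi
          have h2 : i ∈ ((leafList U : List (Fin (k+1))) : Multiset (Fin (k+1))) := by
            simpa using hi
          rw [show ((leafList U : List (Fin (k+1))) : Multiset (Fin (k+1)))
            = (Finset.univ.erase (0 : Fin (k+1))).val from hml] at h2
          exact h2
        have hliftU : (FreeMagma.lift σ' : FreeMagma (Fin (k+1)) →ₙ* FreeMagma A) U = v := by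
          rw [← hlift]
          exact lift_congr U fun i hi => hσ'ne i (Finset.mem_erase.mp (hUleaf i hi)).1
        set f : Fin (k+1) → A := fun i => evalA (σ' i) with hf
        have hconsf : (Fin.cons (evalA u) (fun i : Fin k => evalA (σ' i.succ)) :
            Fin (k+1) → A) = f := by
          funext i
          refine Fin.cases ?_ ?_ i
          · rw [Fin.cons_zero]
            simp [hf, hσ'0]
          · intro j; rw [Fin.cons_succ]
        have hkey := hmix (evalA u) (fun i : Fin k => evalA (σ' i.succ))
          (FreeMagma.of 0 * U) ⟨U, hml, Or.inl rfl⟩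
        rw [hconsf] at hkey
        have heval : evalVar f (FreeMagma.of 0 * U) = evalA u * evalA v := by
          rw [evalVar_mul, evalVar_of]
          rw [show evalVar f U
            = evalA ((FreeMagma.lift σ' : FreeMagma (Fin (k+1)) →ₙ* FreeMagma A) U)
            from (evalA_lift σ' U).symm, hliftU]
          rw [show f 0 = evalA u from by rw [hf]; simp [hσ'0]]
        rw [heval] at hkey
        have hndU : (leafList U).Nodup := by
          have := (Finset.univ.erase (0 : Fin (k+1))).nodup
          rw [← hml] at this
          exact Multiset.coe_nodup.mp this
        have hUtofin : (leafList U).toFinset = Finset.univ.erase (0 : Fin (k+1)) :=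
          toFinset_eq_of_multiset hml
        have hwv : wlen v = ∑ i ∈ Finset.univ.erase (0 : Fin (k+1)), wlen (σ' i) := by
          rw [← hliftU, wlen_eq_sum σ' U hndU, hUtofin]
        have herase : ∑ i ∈ Finset.univ.erase (0 : Fin (k+1)), wlen (σ' i) ≤ μ := by
          rw [← hwv]; omega
        have htotsum : ∑ i, wlen (σ' i) ≤ n := by
          have h2 : wlen (σ' 0) + ∑ i ∈ Finset.univ.erase (0 : Fin (k+1)), wlen (σ' i)
              = ∑ i, wlen (σ' i) :=
            Finset.add_sum_erase _ (fun i => wlen (σ' i)) (Finset.mem_univ 0)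
          rw [hσ'0] at h2
          omega
        have hlvσ : ∀ i, HasLeavesIn S (σ' i) := by
          intro i
          by_cases hi : i = 0
          · rw [hi, hσ'0]; exact huS
          · rw [hσ'ne i hi]
            intro a ha
            exact hvS a (hsub i (Finset.mem_erase.mpr ⟨hi, Finset.mem_univ i⟩) a ha)
        refine Submodule.span_le.mpr ?_ hkey
        rintro a ⟨z, hz, rfl⟩
        rw [show evalVar f z
          = evalA ((FreeMagma.lift σ' : FreeMagma (Fin (k+1)) →ₙ* FreeMagma A) z)
          from (evalA_lift σ' z).symm]
        exact mixhelper k hk S n μ IHmain hIHC σ' hlvσ herase htotsum z hz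

theorem mainLem (k : ℕ) (hk : 2 ≤ k) (hmix : IsKMixing F A k) (S : Set A) :
    ∀ (n : ℕ) (w : FreeMagma A), HasLeavesIn S w → wlen w ≤ n →
      evalA w ∈ Submodule.span F (GdSet F k S n) := by
  intro n
  induction n using Nat.strong_induction_on with | _ n IH =>
  intro w hwS hwlen
  by_cases hirr : Irred F S w
  · cases w with
    | of a =>
        exact Submodule.subset_span ⟨FreeMagma.of a, hwS, hirr, kbounded_of k a, hwlen, rfl⟩
    | mul u v =>
        have hz12 : (FreeMagma.mul u v : FreeMagma A) = u * v := rfl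
        rw [hz12] at hwS hirr hwlen ⊢
        have hpu := wlen_pos u
        have hpv := wlen_pos v
        rw [wlen_mul] at hwlen
        have huS : HasLeavesIn S u := fun a ha =>
          hwS a (by rw [leafList_mul]; exact List.mem_append_left _ ha)
        have hvS : HasLeavesIn S v := fun a ha =>
          hwS a (by rw [leafList_mul]; exact List.mem_append_right _ ha)
        have h1 := IH (wlen u) (by omega) u huS le_rfl
        have h2 := IH (wlen v) (by omega) v hvS le_rfl
        rw [evalA_mul]
        refine mul_mem_of_span h1 h2 ?_
        rintro x ⟨q1, hq1S, hq1I, hq1B, hq1len, rfl⟩ y ⟨q2, hq2S, hq2I, hq2B, hq2len, rfl⟩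
        exact claimC k hk hmix S n IH (min (wlen q1) (wlen q2)) q1 q2
          hq1S hq1I hq1B hq2S hq2I hq2B (by omega) le_rfl
  · rw [Irred] at hirr
    push_neg at hirr
    obtain ⟨m, hmlt, hmem⟩ := hirr
    have hLs : Lspan F S m ≤ Submodule.span F (GdSet F k S n) := by
      rw [Lspan]
      apply Submodule.span_le.mpr
      rintro a ⟨t, htS, htlen, rfl⟩
      exact Submodule.span_mono (GdSet_mono (show m ≤ n by omega))
        (IH m (by omega) t htS htlen)
    exact hLs hmem

end Machinery2

section Statement
variable {F A : Type*} [Field F] [NonUnitalNonAssocRing A] [Module F A]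
  [SMulCommClass F A A] [IsScalarTower F A A]

/- STATEMENT 15 -/
theorem stmt15 (k : ℕ) (hk : 2 ≤ k) (hmix : IsKMixing F A k)
    (S : Set A) (hS : Generates F S)
    (w : FreeMagma A) (hw : HasLeavesIn S w) (hirr : Irred F S w) (hlen : 2 ≤ wlen w) :
    ∃ (n : ℕ) (ws : Fin n → FreeMagma A),
      (∀ i, HasLeavesIn S (ws i) ∧ Irred F S (ws i) ∧ KBounded k (ws i) ∧
        wlen (ws i) ≤ wlen w) ∧
      evalA w ∈ Submodule.span F (Set.range fun i => evalA (ws i)) := by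
  have h := mainLem k hk hmix S (wlen w) w hw le_rfl
  obtain ⟨t, hts, hmem⟩ := Submodule.mem_span_finite_of_mem_span h
  have hsel : ∀ x : {a : A // a ∈ t}, ∃ v : FreeMagma A,
      HasLeavesIn S v ∧ Irred F S v ∧ KBounded k v ∧ wlen v ≤ wlen w ∧ evalA v = ↑x :=
    fun x => hts (Finset.mem_coe.mpr x.2)
  choose g hg1 hg2 hg3 hg4 hg5 using hsel
  refine ⟨t.card, fun i => g (t.equivFin.symm i),
    fun i => ⟨hg1 _, hg2 _, hg3 _, hg4 _⟩, ?_⟩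
  have hsub : (↑t : Set A) ⊆ Set.range fun i => evalA (g (t.equivFin.symm i)) := by
    intro a ha
    have ha' : a ∈ t := Finset.mem_coe.mp ha
    exact ⟨t.equivFin ⟨a, ha'⟩, by simp only [Equiv.symm_apply_apply]; exact hg5 ⟨a, ha'⟩⟩
  exact Submodule.span_mono hsub hmem

end Statement

end P
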